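/- arXiv:2602.08032 — 4 statements merged into one kernel-verified Lean document; each statement's English description precedes it below -/
import Mathlib

section
/- For every probability vector p ∈ Δ^{N−1} and every permutation σ of {1,…,N}, the random action a(p, ω), with ω drawn from the uniform probability measure on [0,1)^{N−1}, is distributed according to p; that is, for every action k ∈ {1,…,N}, the probability of the event {ω : a(p, ω) = k} equals p_k. -/
open MeasureTheory Finset

noncomputable section

/-- Tail sum `S_i(p) = ∑_{j=i}^{N} p_{σ(j)}`, with `N = n+1` and indices as `Fin (n+1)`. -/
def tailSum {n : ℕ} (σ : Equiv.Perm (Fin (n + 1))) (p : Fin (n + 1) → ℝ)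
    (i : Fin (n + 1)) : ℝ :=
  ∑ j ∈ Finset.Ici i, p (σ j)

/-- Threshold `α_i(p) = p_{σ(i)} / S_i(p)` if `S_i(p) > 0`, else `p_{σ(i)}`. -/
def threshold {n : ℕ} (σ : Equiv.Perm (Fin (n + 1))) (p : Fin (n + 1) → ℝ)
    (i : Fin (n + 1)) : ℝ :=
  if 0 < tailSum σ p i then p (σ i) / tailSum σ p i else p (σ i)

open Classical in
/-- The action `a(p, ω)`: `σ(i)` for the smallest index `i` (among the first `n = N - 1`
indices) with `ω_i < α_i(p)`, and `σ(N)` if no such index exists. -/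
def act {n : ℕ} (σ : Equiv.Perm (Fin (n + 1))) (p : Fin (n + 1) → ℝ)
    (ω : Fin n → ℝ) : Fin (n + 1) :=
  match Fin.find? (fun i : Fin n => decide (ω i < threshold σ p i.castSucc)) with
  | some i => σ i.castSucc
  | none => σ (Fin.last n)

/-- The uniform (product Lebesgue) probability measure on `[0,1)^n`. -/
def unif (n : ℕ) : Measure (Fin n → ℝ) :=
  Measure.pi fun _ => volume.restrict (Set.Ico (0 : ℝ) 1)

namespace ActAux

variable {n : ℕ} (σ : Equiv.Perm (Fin (n + 1))) (p : Fin (n + 1) → ℝ)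

lemma tailSum_nonneg (hp : ∀ k, 0 ≤ p k) (i : Fin (n+1)) : 0 ≤ tailSum σ p i :=
  Finset.sum_nonneg fun _ _ => hp _

lemma self_le_tailSum (hp : ∀ k, 0 ≤ p k) (i : Fin (n+1)) : p (σ i) ≤ tailSum σ p i :=
  Finset.single_le_sum (fun j _ => hp (σ j)) (Finset.mem_Ici.mpr le_rfl)

lemma threshold_nonneg (hp : ∀ k, 0 ≤ p k) (i : Fin (n+1)) : 0 ≤ threshold σ p i := by
  unfold threshold; split
  · exact div_nonneg (hp _) (le_of_lt (by assumption))
  · exact hp _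

lemma threshold_le_one (hp : ∀ k, 0 ≤ p k) (i : Fin (n+1)) : threshold σ p i ≤ 1 := by
  unfold threshold; split
  · exact (div_le_one (by assumption)).mpr (self_le_tailSum σ p hp i)
  · have h1 : ¬ 0 < tailSum σ p i := by assumption
    have := self_le_tailSum σ p hp i
    have := hp (σ i)
    push_neg at h1
    linarith

lemma threshold_mul_tailSum (hp : ∀ k, 0 ≤ p k) (i : Fin (n+1)) :
    threshold σ p i * tailSum σ p i = p (σ i) := by
  unfold threshold; split
  · field_simp
  · have h1 : ¬ 0 < tailSum σ p i := by assumption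
    have h0 : tailSum σ p i = 0 := le_antisymm (not_lt.mp h1) (tailSum_nonneg σ p hp i)
    have h2 := self_le_tailSum σ p hp i
    have h3 := hp (σ i)
    rw [h0, mul_zero]
    linarith

lemma tailSum_step (i : Fin n) :
    tailSum σ p i.castSucc = p (σ i.castSucc) + tailSum σ p i.succ := by
  have hins : Finset.Ici i.castSucc = insert i.castSucc (Finset.Ici i.succ) := by
    ext j; simp [Fin.le_def, Fin.ext_iff]; omega
  have hnot : i.castSucc ∉ Finset.Ici i.succ := by
    simp [Fin.le_def]
  rw [tailSum, hins, Finset.sum_insert hnot]; rfl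

lemma one_minus_threshold_mul (hp : ∀ k, 0 ≤ p k) (i : Fin n) :
    (1 - threshold σ p i.castSucc) * tailSum σ p i.castSucc = tailSum σ p i.succ := by
  have hstep := tailSum_step σ p i
  by_cases h : 0 < tailSum σ p i.castSucc
  · rw [threshold, if_pos h]
    field_simp
    linarith
  · have h0 : tailSum σ p i.castSucc = 0 :=
      le_antisymm (not_lt.mp h) (tailSum_nonneg σ p hp i.castSucc)
    have h2 := self_le_tailSum σ p hp i.castSucc
    have h3 := hp (σ i.castSucc)
    rw [h0, mul_zero]
    linarith

lemma telescope (hp : ∀ k, 0 ≤ p k) (hsum : ∑ k, p k = 1) :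
    ∀ m, (hm : m ≤ n) →
      ∏ j ∈ univ.filter (fun j : Fin n => (j : ℕ) < m), (1 - threshold σ p j.castSucc)
        = tailSum σ p ⟨m, Nat.lt_succ_of_le hm⟩ := by
  intro m
  induction m with
  | zero =>
    intro hm
    have h1 : univ.filter (fun j : Fin n => (j:ℕ) < 0) = ∅ := by
      ext j; simp
    have h2 : (Finset.Ici (⟨0, Nat.lt_succ_of_le hm⟩ : Fin (n+1))) = univ := by
      ext j; simp [Fin.le_def]
    rw [h1, Finset.prod_empty, tailSum, h2]
    rw [Equiv.sum_comp σ p, hsum]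
  | succ m ih =>
    intro hm
    have hm' : m < n := hm
    have hset : univ.filter (fun j : Fin n => (j:ℕ) < m+1)
        = insert ⟨m, hm'⟩ (univ.filter fun j : Fin n => (j:ℕ) < m) := by
      ext j; simp [Fin.ext_iff]; omega
    rw [hset, Finset.prod_insert (by simp), ih (le_of_lt hm')]
    have hca : (⟨m, hm'⟩ : Fin n).castSucc = ⟨m, Nat.lt_succ_of_le (le_of_lt hm')⟩ := rfl
    have hsu : (⟨m, hm'⟩ : Fin n).succ = ⟨m+1, Nat.lt_succ_of_le hm⟩ := rfl
    rw [← hca, ← hsu]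
    exact one_minus_threshold_mul σ p hp ⟨m, hm'⟩

lemma meas_Iio {a : ℝ} (h0 : 0 ≤ a) (h1 : a ≤ 1) :
    (volume.restrict (Set.Ico (0:ℝ) 1)) (Set.Iio a) = ENNReal.ofReal a := by
  rw [Measure.restrict_apply measurableSet_Iio]
  have hs : Set.Iio a ∩ Set.Ico (0:ℝ) 1 = Set.Ico 0 a := by
    ext x
    simp only [Set.mem_inter_iff, Set.mem_Iio, Set.mem_Ico]
    constructor
    · rintro ⟨h, h2, _⟩; exact ⟨h2, h⟩
    · rintro ⟨h2, h⟩; exact ⟨h, h2, lt_of_lt_of_le h h1⟩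
  rw [hs, Real.volume_Ico, sub_zero]

lemma meas_Ici {a : ℝ} (h0 : 0 ≤ a) :
    (volume.restrict (Set.Ico (0:ℝ) 1)) (Set.Ici a) = ENNReal.ofReal (1 - a) := by
  rw [Measure.restrict_apply measurableSet_Ici]
  have hs : Set.Ici a ∩ Set.Ico (0:ℝ) 1 = Set.Ico a 1 := by
    ext x
    simp only [Set.mem_inter_iff, Set.mem_Ici, Set.mem_Ico]
    constructor
    · rintro ⟨h, _, h3⟩; exact ⟨h, h3⟩
    · rintro ⟨h, h3⟩; exact ⟨h, le_trans h0 h, h3⟩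
  rw [hs, Real.volume_Ico]

lemma meas_univ :
    (volume.restrict (Set.Ico (0:ℝ) 1)) Set.univ = 1 := by
  rw [Measure.restrict_apply_univ, Real.volume_Ico]
  norm_num

end ActAux

open ActAux

open Classical in
/-- For every probability vector `p` and permutation `σ`, the random action `a(p, ω)` with
`ω` uniform on `[0,1)^{N-1}` is distributed according to `p`: for every action `k`,
the probability of `{ω : a(p, ω) = k}` equals `p k`. -/
theorem action_sampling_distributed (n : ℕ) (σ : Equiv.Perm (Fin (n + 1)))
    (p : Fin (n + 1) → ℝ) (hp : ∀ k, 0 ≤ p k) (hsum : ∑ k, p k = 1)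
    (k : Fin (n + 1)) :
    unif n {ω | act σ p ω = k} = ENNReal.ofReal (p k) := by
  obtain ⟨i, rfl⟩ : ∃ i, σ i = k := ⟨σ.symm k, σ.apply_symm_apply k⟩
  rcases Fin.eq_castSucc_or_eq_last i with ⟨i', rfl⟩ | rfl
  · -- case i = castSucc i'
    set t : Fin n → Set ℝ := fun j =>
      if j = i' then Set.Iio (threshold σ p j.castSucc)
      else if (j:ℕ) < (i':ℕ) then Set.Ici (threshold σ p j.castSucc) else Set.univ with ht
    have hset : {ω : Fin n → ℝ | act σ p ω = σ i'.castSucc} = Set.univ.pi t := by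
      ext ω
      simp only [Set.mem_setOf_eq, Set.mem_pi, Set.mem_univ, forall_true_left, ht]
      unfold act
      split
      · next j heq =>
        rw [Fin.find?_eq_some_iff] at heq
        simp only [decide_eq_true_eq, decide_eq_false_iff_not] at heq
        replace heq : ω j < threshold σ p j.castSucc ∧
            ∀ m, ω m < threshold σ p m.castSucc → j ≤ m :=
          ⟨heq.1, fun m hm => not_lt.mp fun hc => heq.2 m hc hm⟩
        rw [σ.injective.eq_iff, Fin.castSucc_inj]
        constructor
        · rintro rfl m
          by_cases hm : m = j
          · subst hm; rw [if_pos rfl]; exact Set.mem_Iio.mpr heq.1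
          · rw [if_neg hm]
            by_cases hlt : (m:ℕ) < (j:ℕ)
            · rw [if_pos hlt]
              by_contra hcon
              simp only [Set.mem_Ici, not_le] at hcon
              have := heq.2 m hcon
              rw [Fin.le_def] at this
              omega
            · rw [if_neg hlt]; trivial
        · intro h
          have h1 := h i'; rw [if_pos rfl] at h1
          have hle := heq.2 i' (Set.mem_Iio.mp h1)
          by_contra hne
          have hlt : (j:ℕ) < (i':ℕ) := by
            rw [Fin.le_def] at hle
            rcases lt_or_eq_of_le hle with h' | h'
            · exact h'
            · exact absurd (Fin.ext h') hne
          have h2 := h j; rw [if_neg hne, if_pos hlt] at h2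
          exact absurd heq.1 (not_lt.mpr (Set.mem_Ici.mp h2))
      · next heq =>
        rw [Fin.find?_eq_none_iff] at heq
        simp only [decide_eq_false_iff_not] at heq
        constructor
        · intro h
          exact absurd (σ.injective h) (Fin.castSucc_lt_last i').ne'
        · intro h
          exfalso
          have h1 := h i'; rw [if_pos rfl] at h1
          exact heq i' (Set.mem_Iio.mp h1)
    rw [hset]
    unfold unif
    rw [Measure.pi_pi]
    have hprodeq : ∏ j : Fin n, (volume.restrict (Set.Ico (0:ℝ) 1)) (t j)
        = ∏ j : Fin n, (if j = i' then ENNReal.ofReal (threshold σ p j.castSucc)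
            else if (j:ℕ) < (i':ℕ) then ENNReal.ofReal (1 - threshold σ p j.castSucc)
            else 1) := by
      refine Finset.prod_congr rfl fun j _ => ?_
      by_cases h1 : j = i'
      · rw [ht]; simp only [if_pos h1]
        exact meas_Iio (threshold_nonneg σ p hp _) (threshold_le_one σ p hp _)
      · rw [ht]; simp only [if_neg h1]
        by_cases h2 : (j:ℕ) < (i':ℕ)
        · simp only [if_pos h2]
          exact meas_Ici (threshold_nonneg σ p hp _)
        · simp only [if_neg h2]
          exact meas_univ
    rw [hprodeq, ← Finset.mul_prod_erase univ _ (mem_univ i'), if_pos rfl]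
    have hstep : ∏ j ∈ univ.erase i',
        (if j = i' then ENNReal.ofReal (threshold σ p j.castSucc)
          else if (j:ℕ) < (i':ℕ) then ENNReal.ofReal (1 - threshold σ p j.castSucc) else 1)
        = ∏ j ∈ univ.erase i',
          (if (j:ℕ) < (i':ℕ) then ENNReal.ofReal (1 - threshold σ p j.castSucc) else 1) :=
      Finset.prod_congr rfl fun j hj => if_neg (Finset.ne_of_mem_erase hj)
    rw [hstep, ← Finset.prod_filter]
    have hfilter : (univ.erase i').filter (fun j : Fin n => (j:ℕ) < (i':ℕ))
        = univ.filter (fun j : Fin n => (j:ℕ) < (i':ℕ)) := by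
      ext j; simp [Fin.ext_iff]; omega
    rw [hfilter]
    have hofr : ∏ j ∈ univ.filter (fun j : Fin n => (j:ℕ) < (i':ℕ)),
        ENNReal.ofReal (1 - threshold σ p j.castSucc)
        = ENNReal.ofReal (∏ j ∈ univ.filter (fun j : Fin n => (j:ℕ) < (i':ℕ)),
            (1 - threshold σ p j.castSucc)) := by
      rw [ENNReal.ofReal_prod_of_nonneg]
      intro j _
      have := threshold_le_one σ p hp j.castSucc
      linarith
    rw [hofr, telescope σ p hp hsum (i':ℕ) (le_of_lt i'.isLt)]
    have hcast : (⟨(i':ℕ), Nat.lt_succ_of_le (le_of_lt i'.isLt)⟩ : Fin (n+1)) = i'.castSucc := rfl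
    rw [hcast, ← ENNReal.ofReal_mul (threshold_nonneg σ p hp _),
      threshold_mul_tailSum σ p hp i'.castSucc]
  · -- case i = last
    have hset : {ω : Fin n → ℝ | act σ p ω = σ (Fin.last n)}
        = Set.univ.pi (fun j : Fin n => Set.Ici (threshold σ p j.castSucc)) := by
      ext ω
      simp only [Set.mem_setOf_eq, Set.mem_pi, Set.mem_univ, forall_true_left]
      unfold act
      split
      · next j heq =>
        rw [Fin.find?_eq_some_iff] at heq
        simp only [decide_eq_true_eq, decide_eq_false_iff_not] at heq
        replace heq : ω j < threshold σ p j.castSucc ∧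
            ∀ m, ω m < threshold σ p m.castSucc → j ≤ m :=
          ⟨heq.1, fun m hm => not_lt.mp fun hc => heq.2 m hc hm⟩
        constructor
        · intro h
          exact absurd (σ.injective h) (Fin.castSucc_lt_last j).ne
        · intro h
          exact absurd heq.1 (not_lt.mpr (Set.mem_Ici.mp (h j)))
      · next heq =>
        rw [Fin.find?_eq_none_iff] at heq
        simp only [decide_eq_false_iff_not] at heq
        simp only [true_iff, eq_self_iff_true]
        exact fun j => Set.mem_Ici.mpr (not_lt.mp (heq j))
    rw [hset]
    unfold unif
    rw [Measure.pi_pi]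
    have hprodeq : ∏ j : Fin n, (volume.restrict (Set.Ico (0:ℝ) 1)) (Set.Ici (threshold σ p j.castSucc))
        = ∏ j : Fin n, ENNReal.ofReal (1 - threshold σ p j.castSucc) :=
      Finset.prod_congr rfl fun j _ => meas_Ici (threshold_nonneg σ p hp _)
    rw [hprodeq, ← ENNReal.ofReal_prod_of_nonneg (fun j _ => by
      have := threshold_le_one σ p hp (j : Fin n).castSucc; linarith)]
    have hfull : (univ : Finset (Fin n)) = univ.filter (fun j : Fin n => (j:ℕ) < n) := by
      ext j; simp [j.isLt]
    rw [hfull, telescope σ p hp hsum n le_rfl]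
    have hlast : (⟨n, Nat.lt_succ_of_le le_rfl⟩ : Fin (n+1)) = Fin.last n := rfl
    rw [hlast]
    congr 1
    rw [tailSum]
    have : Finset.Ici (Fin.last n) = {Fin.last n} := by
      ext j; simp [Fin.le_def, Fin.ext_iff]; omega
    rw [this, Finset.sum_singleton]
end
end

section
/- For any two probability vectors p, q ∈ Δ^{N−1} and any permutation σ of {1,…,N}, the probability of disagreement is bounded above by the ℓ1 distance between the threshold vectors: Pr_{ω}( a(p, ω) ≠ a(q, ω) ) ≤ Σ_{i=1}^{N−1} |α_i(p) − α_i(q)|, where both actions are computed from the same uniform sample ω on [0,1)^{N−1} and the same permutation σ. -/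
open MeasureTheory Finset

noncomputable section

/-- The probability of disagreement is bounded above by the ℓ1 distance between the
threshold vectors: `Pr(a(p,ω) ≠ a(q,ω)) ≤ ∑_{i=1}^{N-1} |α_i(p) − α_i(q)|`. -/
theorem disagreement_prob_le_threshold_l1 (n : ℕ) (σ : Equiv.Perm (Fin (n + 1)))
    (p q : Fin (n + 1) → ℝ)
    (hp : ∀ k, 0 ≤ p k) (hpsum : ∑ k, p k = 1)
    (hq : ∀ k, 0 ≤ q k) (hqsum : ∑ k, q k = 1) :
    unif n {ω | act σ p ω ≠ act σ q ω} ≤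
      ENNReal.ofReal
        (∑ i : Fin n, |threshold σ p i.castSucc - threshold σ q i.castSucc|) := by
  set a : Fin n → ℝ := fun i => threshold σ p i.castSucc with ha
  set b : Fin n → ℝ := fun i => threshold σ q i.castSucc with hb
  -- the disagreement event is contained in the union of the "between thresholds" events
  have hsub : {ω : Fin n → ℝ | act σ p ω ≠ act σ q ω} ⊆
      ⋃ i : Fin n, {ω : Fin n → ℝ | ω i ∈ Set.Ico (min (a i) (b i)) (max (a i) (b i))} := by
    intro ω hω
    by_contra hc
    simp only [Set.mem_iUnion, not_exists, Set.mem_setOf_eq, Set.mem_Ico, not_and_or,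
      not_lt, not_le] at hc
    apply hω
    have hpred : (fun i : Fin n => ω i < a i) = fun i : Fin n => ω i < b i := by
      funext i
      rcases hc i with h | h
      · rcases lt_min_iff.mp h with ⟨h1, h2⟩
        exact propext ⟨fun _ => h2, fun _ => h1⟩
      · rcases max_le_iff.mp h with ⟨h1, h2⟩
        exact propext ⟨fun h' => absurd h' (not_lt.mpr h1), fun h' => absurd h' (not_lt.mpr h2)⟩
    have hfind : Fin.find? (fun i : Fin n => decide (ω i < threshold σ p i.castSucc))
        = Fin.find? (fun i : Fin n => decide (ω i < threshold σ q i.castSucc)) := by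
      congr 1
      funext i
      exact decide_eq_decide.mpr (Iff.of_eq (congr_fun hpred i))
    unfold act
    rw [hfind]
  calc unif n {ω | act σ p ω ≠ act σ q ω}
      ≤ ∑ i : Fin n, unif n {ω : Fin n → ℝ |
          ω i ∈ Set.Ico (min (a i) (b i)) (max (a i) (b i))} := by
        refine le_trans (measure_mono hsub) ?_
        exact (measure_iUnion_fintype_le _ _)
    _ ≤ ∑ i : Fin n, ENNReal.ofReal |a i - b i| := by
        refine Finset.sum_le_sum fun i _ => ?_
        have hset : {ω : Fin n → ℝ | ω i ∈ Set.Ico (min (a i) (b i)) (max (a i) (b i))}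
            = Set.univ.pi (fun j : Fin n =>
                if j = i then Set.Ico (min (a i) (b i)) (max (a i) (b i)) else Set.univ) := by
          ext ω
          simp only [Set.mem_setOf_eq, Set.mem_pi, Set.mem_univ, forall_true_left]
          constructor
          · intro h j
            by_cases hj : j = i
            · subst hj; simp [h]
            · simp [hj]
          · intro h
            have := h i
            simpa using this
        rw [hset, unif, Measure.pi_pi]
        have h1 : ∀ j : Fin n, j ≠ i →
            (volume.restrict (Set.Ico (0:ℝ) 1))
              ((if j = i then Set.Ico (min (a i) (b i)) (max (a i) (b i)) else Set.univ)) = 1 := by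
          intro j hj
          simp [hj, Measure.restrict_apply_univ, Real.volume_Ico]
        rw [Finset.prod_eq_single i (fun j _ hj => h1 j hj) (by simp)]
        simp only [if_true]
        rw [Measure.restrict_apply measurableSet_Ico]
        refine le_trans (measure_mono Set.inter_subset_left) ?_
        rw [Real.volume_Ico, max_sub_min_eq_abs, abs_sub_comm]
    _ = ENNReal.ofReal (∑ i : Fin n, |a i - b i|) := by
        rw [ENNReal.ofReal_sum_of_nonneg (fun i _ => abs_nonneg _)]
end
end

section
/- For any two probability vectors p, q ∈ Δ^{N−1} and any permutation σ of {1,…,N}, the probability of disagreement admits the exact formula Pr_{ω}( a(p, ω) ≠ a(q, ω) ) = Σ_{i=1}^{N−1} (u_i − l_i) · Π_{j=1}^{i−1} (1 − u_j), where u_i = max(α_i(p), α_i(q)) and l_i = min(α_i(p), α_i(q)), and both actions are computed from the same uniform sample ω on [0,1)^{N−1} and the same permutation σ. -/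
open MeasureTheory Finset

noncomputable section

lemma threshold_mem {n : ℕ} (σ : Equiv.Perm (Fin (n + 1))) (p : Fin (n + 1) → ℝ)
    (hp : ∀ k, 0 ≤ p k) (i : Fin (n + 1)) :
    0 ≤ threshold σ p i ∧ threshold σ p i ≤ 1 := by
  have hle : p (σ i) ≤ tailSum σ p i :=
    Finset.single_le_sum (f := fun j => p (σ j)) (fun j _ => hp (σ j)) (Finset.mem_Ici.2 le_rfl)
  unfold threshold
  split_ifs with h
  · exact ⟨div_nonneg (hp _) h.le, (div_le_one h).2 hle⟩
  · have h0 : p (σ i) = 0 := le_antisymm (hle.trans (not_lt.1 h)) (hp _)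
    simp [h0]

lemma ofind_spec {n : ℕ} {P : Fin n → Prop} [DecidablePred P] {a : Fin n}
    (h : Fin.find? (fun i => decide (P i)) = some a) : P a :=
  of_decide_eq_true (Fin.eq_true_of_find?_eq_some h)

lemma ofind_min {n : ℕ} {P : Fin n → Prop} [DecidablePred P] {a : Fin n}
    (h : Fin.find? (fun i => decide (P i)) = some a) {j : Fin n} (hj : j < a) : ¬ P j :=
  of_decide_eq_false (Fin.eq_false_of_find?_eq_some_of_lt h j hj)

lemma ofind_min' {n : ℕ} {P : Fin n → Prop} [DecidablePred P] {a : Fin n}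
    (h : Fin.find? (fun i => decide (P i)) = some a) {j : Fin n} (hj : P j) : a ≤ j :=
  not_lt.1 fun hlt => ofind_min h hlt hj

lemma oisSome_find_iff {n : ℕ} {P : Fin n → Prop} [DecidablePred P] :
    (Fin.find? (fun i => decide (P i))).isSome ↔ ∃ i, P i :=
  Fin.isSome_find?_iff.trans (by simp)

lemma omem_find_iff {n : ℕ} {P : Fin n → Prop} [DecidablePred P] {a : Fin n} :
    a ∈ Fin.find? (fun i => decide (P i)) ↔ P a ∧ ∀ b, P b → a ≤ b := by
  rw [Option.mem_def]
  constructor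
  · intro h; exact ⟨ofind_spec h, fun b hb => ofind_min' h hb⟩
  · rintro ⟨h1, h2⟩
    exact Fin.find?_eq_some_iff.2 ⟨decide_eq_true h1,
      fun j hj => decide_eq_false fun hp => absurd (h2 j hp) (not_le.2 hj)⟩

lemma find_ne_find_iff {n : ℕ} (P Q : Fin n → Prop) [DecidablePred P] [DecidablePred Q] :
    Fin.find? (fun i => decide (P i)) ≠ Fin.find? (fun i => decide (Q i)) ↔
      ∃ i, (∀ j, j < i → ¬ P j ∧ ¬ Q j) ∧ ¬ (P i ↔ Q i) := by
  constructor
  · intro h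
    by_contra hc
    push_neg at hc
    apply h
    have key : ∀ (R S : Fin n → Prop) [DecidablePred R] [DecidablePred S],
        (∀ i, (∀ j, j < i → ¬ R j ∧ ¬ S j) → (R i ↔ S i)) →
        ∀ a, Fin.find? (fun i => decide (R i)) = some a → Fin.find? (fun i => decide (S i)) = some a := by
      intro R S _ _ hc a ha
      have hRa : R a := ofind_spec ha
      have hminR : ∀ j, j < a → ¬ R j := fun j hj => ofind_min ha hj
      have hminS : ∀ j, j < a → ¬ S j := by
        by_contra hx
        push_neg at hx
        obtain ⟨j, hj, hSj⟩ := hx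
        have : (Fin.find? (fun i => decide (S i))).isSome := oisSome_find_iff.2 ⟨j, hSj⟩
        obtain ⟨b, hb⟩ := Option.isSome_iff_exists.1 this
        have hble : b ≤ j := ofind_min' hb hSj
        have hba : b < a := lt_of_le_of_lt hble hj
        have : R b ↔ S b := hc b (fun k hk => ⟨hminR k (hk.trans hba), ofind_min hb hk⟩)
        exact hminR b hba (this.2 (ofind_spec hb))
      have hSa : S a := (hc a (fun j hj => ⟨hminR j hj, hminS j hj⟩)).1 hRa
      rw [← Option.mem_def, omem_find_iff]
      exact ⟨hSa, fun j hj => Fin.not_lt.1 fun hlt => hminS j hlt hj⟩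
    rcases hfp : Fin.find? (fun i => decide (P i)) with _ | a
    · rcases hfq : Fin.find? (fun i => decide (Q i)) with _ | b
      · rfl
      · have := key Q P (fun i hi => (hc i (fun j hj => ⟨(hi j hj).2, (hi j hj).1⟩)).symm) b hfq
        rw [this] at hfp; exact absurd hfp (by simp)
    · exact (key P Q hc a hfp).symm
  · rintro ⟨i, hbelow, hxor⟩ heq
    by_cases hP : P i
    · have hQ : ¬ Q i := fun h => hxor ⟨fun _ => h, fun _ => hP⟩
      have : (Fin.find? (fun i => decide (P i))).isSome := oisSome_find_iff.2 ⟨i, hP⟩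
      obtain ⟨a, ha⟩ := Option.isSome_iff_exists.1 this
      have hai : a ≤ i := ofind_min' ha hP
      have : a = i := le_antisymm hai (Fin.not_lt.1 fun hlt => (hbelow a hlt).1 (ofind_spec ha))
      subst this
      rw [heq] at ha
      exact hQ (ofind_spec ha)
    · have hQ : Q i := by
        by_contra hQ
        exact hxor ⟨fun h => absurd h hP, fun h => absurd h hQ⟩
      have : (Fin.find? (fun i => decide (Q i))).isSome := oisSome_find_iff.2 ⟨i, hQ⟩
      obtain ⟨a, ha⟩ := Option.isSome_iff_exists.1 this
      have hai : a ≤ i := ofind_min' ha hQ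
      have : a = i := le_antisymm hai (Fin.not_lt.1 fun hlt => (hbelow a hlt).2 (ofind_spec ha))
      subst this
      rw [← heq] at ha
      exact hP (ofind_spec ha)

open Classical in
lemma act_ne_act_iff {n : ℕ} (σ : Equiv.Perm (Fin (n + 1))) (p q : Fin (n + 1) → ℝ)
    (ω : Fin n → ℝ) :
    act σ p ω ≠ act σ q ω ↔
      ∃ i : Fin n, (∀ j, j < i → ¬ ω j < threshold σ p j.castSucc ∧ ¬ ω j < threshold σ q j.castSucc)
        ∧ ¬ (ω i < threshold σ p i.castSucc ↔ ω i < threshold σ q i.castSucc) := by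
  rw [← find_ne_find_iff]
  unfold act
  rcases hfp : Fin.find? (fun i : Fin n => decide (ω i < threshold σ p i.castSucc)) with _ | a <;>
    rcases hfq : Fin.find? (fun i : Fin n => decide (ω i < threshold σ q i.castSucc)) with _ | b <;>
    simp only [hfp, hfq, ne_eq, Option.some.injEq]
  · simp only [Equiv.apply_eq_iff_eq]
    refine iff_of_true (fun h => ?_) (by simp)
    exact (Fin.castSucc_lt_last b).ne h.symm
  · simp only [Equiv.apply_eq_iff_eq]
    refine iff_of_true (fun h => ?_) (by simp)
    exact (Fin.castSucc_lt_last a).ne h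
  · rw [σ.injective.eq_iff, Fin.castSucc_inj]

lemma xor_lt_iff (a b x : ℝ) : ¬((x < a) ↔ (x < b)) ↔ (min a b ≤ x ∧ x < max a b) := by
  rcases le_total a b with h | h
  · rw [min_eq_left h, max_eq_right h]
    constructor
    · intro hne
      have h1 : ¬ x < a := fun hx => hne ⟨fun _ => hx.trans_le h, fun _ => hx⟩
      have h2 : x < b := by
        by_contra hx
        exact hne ⟨fun hxa => absurd hxa h1, fun hxb => absurd hxb hx⟩
      exact ⟨not_lt.1 h1, h2⟩
    · rintro ⟨ha, hb⟩ hiff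
      exact absurd (hiff.2 hb) (not_lt.2 ha)
  · rw [min_eq_right h, max_eq_left h]
    constructor
    · intro hne
      have h2 : ¬ x < b := fun hx => hne ⟨fun hxa => hx, fun hx2 => hx2.trans_le h⟩
      have h1 : x < a := by
        by_contra hx
        exact hne ⟨fun hxa => absurd hxa hx, fun hxb => absurd hxb h2⟩
      exact ⟨not_lt.1 h2, h1⟩
    · rintro ⟨hb, ha⟩ hiff
      exact absurd (hiff.1 ha) (not_lt.2 hb)

/-- Exact formula for the disagreement probability:
`Pr(a(p,ω) ≠ a(q,ω)) = ∑_{i=1}^{N-1} (u_i − l_i) · ∏_{j<i} (1 − u_j)`,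
where `u_i = max(α_i(p), α_i(q))` and `l_i = min(α_i(p), α_i(q))`. -/
theorem disagreement_prob_eq (n : ℕ) (σ : Equiv.Perm (Fin (n + 1)))
    (p q : Fin (n + 1) → ℝ)
    (hp : ∀ k, 0 ≤ p k) (hpsum : ∑ k, p k = 1)
    (hq : ∀ k, 0 ≤ q k) (hqsum : ∑ k, q k = 1) :
    unif n {ω | act σ p ω ≠ act σ q ω} =
      ENNReal.ofReal
        (∑ i : Fin n,
          (max (threshold σ p i.castSucc) (threshold σ q i.castSucc)
            - min (threshold σ p i.castSucc) (threshold σ q i.castSucc)) *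
          ∏ j ∈ Finset.Iio i,
            (1 - max (threshold σ p j.castSucc) (threshold σ q j.castSucc))) := by
  classical
  set u : Fin n → ℝ := fun i => max (threshold σ p i.castSucc) (threshold σ q i.castSucc) with hu
  set l : Fin n → ℝ := fun i => min (threshold σ p i.castSucc) (threshold σ q i.castSucc) with hl
  have hu0 : ∀ i, 0 ≤ u i := fun i =>
    le_trans (threshold_mem σ p hp i.castSucc).1 (le_max_left _ _)
  have hu1 : ∀ i, u i ≤ 1 := fun i =>
    max_le (threshold_mem σ p hp i.castSucc).2 (threshold_mem σ q hq i.castSucc).2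
  have hl0 : ∀ i, 0 ≤ l i := fun i =>
    le_min (threshold_mem σ p hp i.castSucc).1 (threshold_mem σ q hq i.castSucc).1
  have hlu : ∀ i, l i ≤ u i := fun i => min_le_max
  set B : Fin n → Fin n → Set ℝ := fun i j =>
    if j < i then Set.Ici (u j) else if j = i then Set.Ico (l i) (u i) else Set.univ with hB
  set A : Fin n → Set (Fin n → ℝ) := fun i => Set.pi Set.univ (B i) with hA
  have hmemA : ∀ (i : Fin n) (ω : Fin n → ℝ),
      ω ∈ A i ↔ (∀ j, j < i → u j ≤ ω j) ∧ l i ≤ ω i ∧ ω i < u i := by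
    intro i ω
    simp only [hA, Set.mem_pi, Set.mem_univ, forall_true_left, hB]
    constructor
    · intro h
      refine ⟨fun j hj => ?_, ?_, ?_⟩
      · have := h j; rw [if_pos hj] at this; exact this
      · have := h i; rw [if_neg (lt_irrefl i), if_pos rfl] at this; exact this.1
      · have := h i; rw [if_neg (lt_irrefl i), if_pos rfl] at this; exact this.2
    · rintro ⟨h1, h2, h3⟩ j
      split_ifs with hj hji
      · exact h1 j hj
      · subst hji; exact ⟨h2, h3⟩
      · trivial
  have hset : {ω : Fin n → ℝ | act σ p ω ≠ act σ q ω} = ⋃ i, A i := by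
    ext ω
    simp only [Set.mem_setOf_eq, Set.mem_iUnion, act_ne_act_iff σ p q ω]
    constructor
    · rintro ⟨i, h1, h2⟩
      refine ⟨i, (hmemA i ω).2 ⟨fun j hj => ?_, ((xor_lt_iff _ _ _).1 h2).1,
        ((xor_lt_iff _ _ _).1 h2).2⟩⟩
      exact max_le (not_lt.1 (h1 j hj).1) (not_lt.1 (h1 j hj).2)
    · rintro ⟨i, hi⟩
      obtain ⟨h1, h2, h3⟩ := (hmemA i ω).1 hi
      refine ⟨i, fun j hj => ⟨not_lt.2 (le_trans (le_max_left _ _) (h1 j hj)),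
        not_lt.2 (le_trans (le_max_right _ _) (h1 j hj))⟩, (xor_lt_iff _ _ _).2 ⟨h2, h3⟩⟩
  have hBmeas : ∀ i j, MeasurableSet (B i j) := by
    intro i j
    simp only [hB]
    split_ifs
    · exact measurableSet_Ici
    · exact measurableSet_Ico
    · exact MeasurableSet.univ
  have hAmeas : ∀ i, MeasurableSet (A i) := fun i => MeasurableSet.univ_pi (hBmeas i)
  have hdisj : Pairwise (Function.onFun Disjoint A) := by
    have key : ∀ i i' : Fin n, i < i' → Disjoint (A i) (A i') := by
      intro i i' hlt
      rw [Set.disjoint_left]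
      intro ω hω hω'
      exact absurd (((hmemA i' ω).1 hω').1 i hlt) (not_le.2 ((hmemA i ω).1 hω).2.2)
    intro i i' hne
    rcases hne.lt_or_gt with h | h
    · exact key i i' h
    · exact (key i' i h).symm
  have hAi : ∀ i, unif n (A i) =
      ENNReal.ofReal ((u i - l i) * ∏ j ∈ Finset.Iio i, (1 - u j)) := by
    intro i
    rw [hA]
    unfold unif
    rw [Measure.pi_pi]
    have hIci : ∀ x : ℝ, 0 ≤ x →
        (volume.restrict (Set.Ico (0:ℝ) 1)) (Set.Ici x) = ENNReal.ofReal (1 - x) := by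
      intro x h0
      rw [Measure.restrict_apply measurableSet_Ici]
      have : Set.Ici x ∩ Set.Ico (0:ℝ) 1 = Set.Ico x 1 := by
        ext y
        simp only [Set.mem_inter_iff, Set.mem_Ici, Set.mem_Ico]
        exact ⟨fun ⟨h, _, h2⟩ => ⟨h, h2⟩, fun ⟨h, h2⟩ => ⟨h, h0.trans h, h2⟩⟩
      rw [this, Real.volume_Ico]
    have huniv : (volume.restrict (Set.Ico (0:ℝ) 1)) Set.univ = 1 := by
      rw [Measure.restrict_apply_univ, Real.volume_Ico]
      norm_num
    have hIcov : (volume.restrict (Set.Ico (0:ℝ) 1)) (Set.Ico (l i) (u i)) =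
        ENNReal.ofReal (u i - l i) := by
      rw [Measure.restrict_apply measurableSet_Ico]
      have : Set.Ico (l i) (u i) ∩ Set.Ico (0:ℝ) 1 = Set.Ico (l i) (u i) := by
        apply Set.inter_eq_self_of_subset_left
        intro y hy
        exact ⟨(hl0 i).trans hy.1, hy.2.trans_le (hu1 i)⟩
      rw [this, Real.volume_Ico]
    rw [← Finset.mul_prod_erase Finset.univ _ (Finset.mem_univ i)]
    have hBi : B i i = Set.Ico (l i) (u i) := by
      rw [hB]; simp
    have herase : ∏ j ∈ Finset.univ.erase i, (volume.restrict (Set.Ico (0:ℝ) 1)) (B i j)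
        = ∏ j ∈ Finset.Iio i, ENNReal.ofReal (1 - u j) := by
      rw [← Finset.prod_subset (fun j hj => Finset.mem_erase.2
        ⟨ne_of_lt (Finset.mem_Iio.1 hj), Finset.mem_univ j⟩) ?_]
      · apply Finset.prod_congr rfl
        intro j hj
        have hjlt : j < i := Finset.mem_Iio.1 hj
        have : B i j = Set.Ici (u j) := by rw [hB]; simp [hjlt]
        rw [this, hIci (u j) (hu0 j)]
      · intro j hjmem hj
        have h1 : ¬ j < i := fun h => hj (Finset.mem_Iio.2 h)
        have hne : j ≠ i := (Finset.mem_erase.1 hjmem).1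
        have hBj : B i j = Set.univ := by
          simp only [hB]
          rw [if_neg h1, if_neg hne]
        rw [hBj, huniv]
    rw [hBi, hIcov, herase, ENNReal.ofReal_mul (sub_nonneg.2 (hlu i)),
      ENNReal.ofReal_prod_of_nonneg (fun j _ => sub_nonneg.2 (hu1 j))]
  rw [hset, measure_iUnion hdisj hAmeas, tsum_fintype]
  simp only [hAi]
  rw [← ENNReal.ofReal_sum_of_nonneg (fun i _ => mul_nonneg (sub_nonneg.2 (hlu i))
    (Finset.prod_nonneg fun j _ => sub_nonneg.2 (hu1 j)))]
end
end

section
/- Let p, q ∈ Δ^{N−1} be probability vectors, σ a permutation of {1,…,N}, and set u_j = max(α_j(p), α_j(q)) and l_j = min(α_j(p), α_j(q)). Define C_i = { ω ∈ [0,1)^{N−1} : ω_j ≥ u_j for all j < i and l_i ≤ ω_i < u_i } for 1 ≤ i ≤ N−1. Then the disagreement set equals the union of the sets C_i: { ω ∈ [0,1)^{N−1} : a(p, ω) ≠ a(q, ω) } = ⋃_{i=1}^{N−1} C_i. -/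
open MeasureTheory Finset

noncomputable section

lemma find_eq_some_iff' {n : ℕ} {P : Fin n → Prop} [DecidablePred P] {i : Fin n} :
    Fin.find? (fun k => decide (P k)) = some i ↔ P i ∧ ∀ j, P j → i ≤ j := by
  rw [Fin.find?_eq_some_iff]
  simp only [decide_eq_true_eq, decide_eq_false_iff_not]
  constructor
  · rintro ⟨h1, h2⟩
    exact ⟨h1, fun j hj => le_of_not_gt fun h => h2 j h hj⟩
  · rintro ⟨h1, h2⟩
    exact ⟨h1, fun j hj hPj => absurd (h2 j hPj) (not_le.2 hj)⟩

lemma find_eq_none_iff' {n : ℕ} {P : Fin n → Prop} [DecidablePred P] :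
    Fin.find? (fun k => decide (P k)) = none ↔ ∀ i, ¬ P i := by
  rw [Fin.find?_eq_none_iff]
  simp only [decide_eq_false_iff_not]

lemma isSome_find_iff' {n : ℕ} {P : Fin n → Prop} [DecidablePred P] :
    (Fin.find? (fun k => decide (P k))).isSome ↔ ∃ i, P i := by
  rw [Fin.isSome_find?_iff]
  simp only [decide_eq_true_eq]

/-- Two `Fin.find`s differ iff there is an index `i` before which both predicates fail
and at which exactly one of them holds. -/
lemma find_ne_iff {n : ℕ} (P Q : Fin n → Prop) [DecidablePred P] [DecidablePred Q] :
    Fin.find? (fun k => decide (P k)) ≠ Fin.find? (fun k => decide (Q k)) ↔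
      ∃ i, (∀ j < i, ¬ P j ∧ ¬ Q j) ∧ ((P i ∧ ¬ Q i) ∨ (¬ P i ∧ Q i)) := by
  classical
  constructor
  · intro hne
    have hex : ∃ i, ¬(P i ↔ Q i) := by
      by_contra h
      push_neg at h
      apply hne
      rcases hfp : Fin.find? (fun k => decide (P k)) with _ | i
      · symm
        rw [find_eq_none_iff'] at hfp ⊢
        intro i hi; exact hfp i ((h i).2 hi)
      · symm
        rw [find_eq_some_iff'] at hfp ⊢
        exact ⟨(h i).1 hfp.1, fun j hj => hfp.2 j ((h j).2 hj)⟩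
    obtain ⟨i, hfD⟩ := Option.isSome_iff_exists.1 (isSome_find_iff'.2 hex)
    rw [find_eq_some_iff'] at hfD
    obtain ⟨hDi, hDmin⟩ := hfD
    have hiff : ∀ j, j < i → (P j ↔ Q j) := by
      intro j hj
      by_contra h
      exact absurd hj (not_lt.2 (hDmin j h))
    have hnotP : ∀ j, j < i → ¬ P j := by
      intro j hj hPj
      apply hne
      obtain ⟨j₀, hj₀⟩ := Option.isSome_iff_exists.1 (isSome_find_iff'.2 ⟨j, hPj⟩)
      rw [hj₀]
      rw [find_eq_some_iff'] at hj₀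
      have hj₀i : j₀ < i := lt_of_le_of_lt (hj₀.2 j hPj) hj
      symm
      rw [find_eq_some_iff']
      refine ⟨(hiff j₀ hj₀i).1 hj₀.1, fun k hk => ?_⟩
      by_contra hlt
      push_neg at hlt
      exact absurd (hj₀.2 k ((hiff k (hlt.trans hj₀i)).2 hk)) (not_le.2 hlt)
    have hnotQ : ∀ j, j < i → ¬ Q j := fun j hj hQj => hnotP j hj ((hiff j hj).2 hQj)
    exact ⟨i, fun j hj => ⟨hnotP j hj, hnotQ j hj⟩, by tauto⟩
  · rintro ⟨i, hjs, hcases⟩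
    rcases hcases with ⟨h1, h2⟩ | ⟨h1, h2⟩
    · have hfP : Fin.find? (fun k => decide (P k)) = some i :=
        find_eq_some_iff'.2 ⟨h1, fun j hj => le_of_not_gt fun h => (hjs j h).1 hj⟩
      intro heq
      rw [hfP] at heq
      exact h2 (find_eq_some_iff'.1 heq.symm).1
    · have hfQ : Fin.find? (fun k => decide (Q k)) = some i :=
        find_eq_some_iff'.2 ⟨h2, fun j hj => le_of_not_gt fun h => (hjs j h).2 hj⟩
      intro heq
      rw [hfQ] at heq
      exact h1 (find_eq_some_iff'.1 heq).1

open Classical in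
/-- Actions differ iff the corresponding `Fin.find`s differ. -/
lemma act_ne_iff {n : ℕ} (σ : Equiv.Perm (Fin (n + 1))) (p q : Fin (n + 1) → ℝ)
    (ω : Fin n → ℝ) :
    act σ p ω ≠ act σ q ω ↔
      Fin.find? (fun i : Fin n => decide (ω i < threshold σ p i.castSucc)) ≠
      Fin.find? (fun i : Fin n => decide (ω i < threshold σ q i.castSucc)) := by
  unfold act
  rcases hfp : Fin.find? (fun i : Fin n => decide (ω i < threshold σ p i.castSucc)) with _ | i <;>
    rcases hfq : Fin.find? (fun i : Fin n => decide (ω i < threshold σ q i.castSucc)) with _ | j <;>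
    simp only []
  · simp
  · constructor
    · intro _ h; exact nomatch h
    · intro _ h
      have := σ.injective h
      exact absurd this.symm (Fin.castSucc_lt_last j).ne
  · constructor
    · intro _ h; exact nomatch h
    · intro _ h
      have := σ.injective h
      exact absurd this (Fin.castSucc_lt_last i).ne
  · constructor
    · intro h h'
      exact h (by rw [Option.some_inj.mp h'])
    · intro h h'
      exact h (by rw [Fin.castSucc_inj.mp (σ.injective h')])

/-- The disagreement set equals the union of the sets `C_i`:
`{ω ∈ [0,1)^{N-1} : a(p, ω) ≠ a(q, ω)} = ⋃_{i=1}^{N-1} C_i`, where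
`C_i = {ω ∈ [0,1)^{N-1} : ω_j ≥ u_j ∀ j < i, l_i ≤ ω_i < u_i}`,
with `u_j = max(α_j(p), α_j(q))` and `l_j = min(α_j(p), α_j(q))`. -/
theorem disagreement_set_eq_union (n : ℕ) (σ : Equiv.Perm (Fin (n + 1)))
    (p q : Fin (n + 1) → ℝ)
    (hp : ∀ k, 0 ≤ p k) (hpsum : ∑ k, p k = 1)
    (hq : ∀ k, 0 ≤ q k) (hqsum : ∑ k, q k = 1) :
    let u : Fin n → ℝ :=
      fun j => max (threshold σ p j.castSucc) (threshold σ q j.castSucc)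
    let l : Fin n → ℝ :=
      fun j => min (threshold σ p j.castSucc) (threshold σ q j.castSucc)
    let box : Set (Fin n → ℝ) := {ω | ∀ j, ω j ∈ Set.Ico (0 : ℝ) 1}
    let C : Fin n → Set (Fin n → ℝ) :=
      fun i => {ω ∈ box | (∀ j < i, u j ≤ ω j) ∧ l i ≤ ω i ∧ ω i < u i}
    {ω ∈ box | act σ p ω ≠ act σ q ω} = ⋃ i, C i := by
  classical
  intro u l box C
  ext ω
  simp only [C, Set.mem_setOf_eq, Set.mem_iUnion, Set.mem_sep_iff]
  rw [act_ne_iff, find_ne_iff]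
  constructor
  · rintro ⟨hbox, i, hjs, hcase⟩
    refine ⟨i, hbox, ?_, ?_, ?_⟩
    · intro j hj
      exact max_le (not_lt.1 (hjs j hj).1) (not_lt.1 (hjs j hj).2)
    · rcases hcase with ⟨_, h2⟩ | ⟨h1, _⟩
      · exact le_trans (min_le_right _ _) (not_lt.1 h2)
      · exact le_trans (min_le_left _ _) (not_lt.1 h1)
    · rcases hcase with ⟨h1, _⟩ | ⟨_, h2⟩
      · exact lt_of_lt_of_le h1 (le_max_left _ _)
      · exact lt_of_lt_of_le h2 (le_max_right _ _)
  · rintro ⟨i, hbox, hjs, hl, hu⟩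
    refine ⟨hbox, i, ?_, ?_⟩
    · intro j hj
      exact ⟨not_lt.2 (le_trans (le_max_left _ _) (hjs j hj)),
             not_lt.2 (le_trans (le_max_right _ _) (hjs j hj))⟩
    · have hor : (ω i < threshold σ p i.castSucc) ∨ (ω i < threshold σ q i.castSucc) :=
        lt_max_iff.1 hu
      have hnor : ¬(ω i < threshold σ p i.castSucc) ∨ ¬(ω i < threshold σ q i.castSucc) := by
        rcases min_le_iff.1 hl with h | h
        · exact Or.inl (not_lt.2 h)
        · exact Or.inr (not_lt.2 h)
      tauto
end
end
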